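/- Let C, S, H₀, H₁, …, H_r be n × n complex matrices and let 𝔠 be a ℂ-linear subspace of the n × n matrices such that: C ∈ 𝔠; for every X ∈ 𝔠 and every 0 ≤ i ≤ r, ⁅X, H_i⁆ ∈ 𝔠; and ⁅X, S⁆ = 0 for every X ∈ 𝔠. Then for every k, every list of times t₁, …, t_k ∈ ℝ and every piecewise-constant controls u(m, i) ∈ ℝ (1 ≤ m ≤ k, 1 ≤ i ≤ r), setting A_m = H₀ + Σᵢ u(m, i) • H_i, one has exp(−t₁ • (A₁ + S)) ⋯ exp(−t_k • (A_k + S)) * C * exp(t_k • (A_k + S)) ⋯ exp(t₁ • (A₁ + S)) = exp(−t₁ • A₁) ⋯ exp(−t_k • A_k) * C * exp(t_k • A_k) ⋯ exp(t₁ • A₁). -/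

import Mathlib

open NormedSpace

namespace OpenLoopAux

section

attribute [local instance] Matrix.linftyOpNormedAddCommGroup Matrix.linftyOpNormedSpace
  Matrix.linftyOpNormedRing Matrix.linftyOpNormedAlgebra

variable {n : ℕ}

local notation "M" => Matrix (Fin n) (Fin n) ℂ

@[reducible, local instance] noncomputable def mTop : TopologicalSpace M :=
  PseudoMetricSpace.toUniformSpace.toTopologicalSpace

private lemma ode_eq {E : Type*} [NormedAddCommGroup E] [NormedSpace ℝ E]
    (v : E → E) (K : NNReal) (hv : LipschitzWith K v) (f g : ℝ → E)
    (hf : ∀ s, HasDerivAt f (v (f s)) s) (hg : ∀ s, HasDerivAt g (v (g s)) s)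
    (h0 : f 0 = g 0) (t : ℝ) : f t = g t := by
  have habs : (0:ℝ) < |t| + 1 := by positivity
  refine ODE_solution_unique_of_mem_Icc (v := fun _ => v) (s := fun _ => Set.univ)
    (K := K) (t₀ := (0:ℝ)) (a := -(|t| + 1)) (b := |t| + 1)
    (fun _ _ => hv.lipschitzOnWith) ⟨by linarith, habs⟩
    (fun s _ => (hf s).continuousAt.continuousWithinAt)
    (fun s _ => hf s) (fun _ _ => trivial)
    (fun s _ => (hg s).continuousAt.continuousWithinAt)
    (fun s _ => hg s) (fun _ _ => trivial) h0 ?_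
  constructor
  · linarith [neg_abs_le t]
  · linarith [le_abs_self t]

noncomputable def cnj (B X : M) (t : ℝ) : M :=
  exp ((-t) • B) * X * exp (t • B)

private lemma cnj_hasDerivAt (B X : M) (t : ℝ) :
    HasDerivAt (cnj B X) (cnj B X t * B - B * cnj B X t) t := by
  have h1 : HasDerivAt (fun s : ℝ => exp ((-s) • B)) (exp ((-t) • B) * (-B)) t := by
    have := hasDerivAt_exp_smul_const (𝕂 := ℝ) (-B) t
    simp only [smul_neg, ← neg_smul] at this
    exact this
  have h2 : HasDerivAt (fun s : ℝ => exp (s • B)) (exp (t • B) * B) t :=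
    hasDerivAt_exp_smul_const (𝕂 := ℝ) B t
  have h := (h1.mul_const X).mul h2
  have hc : B * exp ((-t) • B) = exp ((-t) • B) * B :=
    (((Commute.refl B).smul_right ((-t):ℝ)).exp_right).eq
  refine h.congr_deriv ?_
  unfold cnj
  rw [show B * (exp ((-t) • B) * X * exp (t • B))
      = exp ((-t) • B) * B * X * exp (t • B) from by rw [← mul_assoc, ← mul_assoc, hc]]
  noncomm_ring


private lemma cnj_mem (𝔠 : Submodule ℂ M) (B X : M)
    (hB : ∀ Y ∈ 𝔠, ⁅Y, B⁆ ∈ 𝔠) (hX : X ∈ 𝔠) (t : ℝ) :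
    cnj B X t ∈ 𝔠 := by
  haveI : IsClosed (𝔠 : Set M) := Submodule.closed_of_finiteDimensional 𝔠
  set Tlin : M →ₗ[ℂ] M := LinearMap.mulRight ℂ B - LinearMap.mulLeft ℂ B with hT
  have hmap : 𝔠 ≤ 𝔠.comap Tlin := by
    intro Y hY
    have := hB Y hY
    simpa [hT, Ring.lie_def] using this
  set Tbar : (M ⧸ 𝔠) →ₗ[ℂ] (M ⧸ 𝔠) := 𝔠.mapQ 𝔠 Tlin hmap with hTbar
  set TbarL : (M ⧸ 𝔠) →L[ℂ] (M ⧸ 𝔠) := LinearMap.toContinuousLinearMap Tbar with hTL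
  set π : M →L[ℂ] (M ⧸ 𝔠) := LinearMap.toContinuousLinearMap 𝔠.mkQ with hπ
  have key : ∀ s : ℝ, (fun s => π (cnj B X s)) s = (fun _ : ℝ => (0 : M ⧸ 𝔠)) s := by
    refine ode_eq (fun x => TbarL x) ‖TbarL‖₊ TbarL.lipschitz _ _ ?_ ?_ ?_
    · intro s
      have h := (π.restrictScalars ℝ).hasFDerivAt.comp_hasDerivAt s (cnj_hasDerivAt B X s)
      convert h using 1 <;> rfl
    · intro s
      simpa using hasDerivAt_const s (0 : M ⧸ 𝔠)
    · show π (cnj B X 0) = 0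
      have : cnj B X 0 = X := by simp [cnj]
      rw [this]
      simpa [hπ] using (Submodule.Quotient.mk_eq_zero 𝔠).2 hX
  have := key t
  simp only [hπ, LinearMap.coe_toContinuousLinearMap'] at this
  exact (Submodule.Quotient.mk_eq_zero 𝔠).1 this

private lemma cnj_eq (𝔠 : Submodule ℂ M) (B S X : M)
    (hB : ∀ Y ∈ 𝔠, ⁅Y, B⁆ ∈ 𝔠) (hS : ∀ Y ∈ 𝔠, ⁅Y, S⁆ = 0) (hX : X ∈ 𝔠) (t : ℝ) :
    cnj (B + S) X t = cnj B X t := by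
  set Tlin : M →ₗ[ℂ] M := LinearMap.mulRight ℂ (B + S) - LinearMap.mulLeft ℂ (B + S) with hT
  set TL : M →L[ℂ] M := LinearMap.toContinuousLinearMap Tlin with hTL
  refine ode_eq (fun x => TL x) ‖TL‖₊ TL.lipschitz _ _ ?_ ?_ ?_ t
  · intro s
    exact cnj_hasDerivAt (B + S) X s
  · intro s
    refine (cnj_hasDerivAt B X s).congr_deriv ?_
    have hmem := cnj_mem 𝔠 B X hB hX s
    have hcomm : cnj B X s * S = S * cnj B X s := by
      have := hS _ hmem
      rw [Ring.lie_def, sub_eq_zero] at this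
      exact this
    simp only [hTL, hT, LinearMap.coe_toContinuousLinearMap', LinearMap.sub_apply,
      LinearMap.mulRight_apply, LinearMap.mulLeft_apply]
    rw [mul_add, add_mul, hcomm]
    abel
  · simp [cnj]

private lemma mul_shuffle (E P Y Q E' : M) :
    E * P * Y * (Q * E') = E * (P * Y * Q) * E' := by noncomm_ring

private lemma prod_conj (𝔠 : Submodule ℂ M) (S : M) (hS : ∀ Y ∈ 𝔠, ⁅Y, S⁆ = 0) :
    ∀ (k : ℕ) (A : Fin k → M), (∀ m, ∀ Y ∈ 𝔠, ⁅Y, A m⁆ ∈ 𝔠) → ∀ (t : Fin k → ℝ)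
      (X : M), X ∈ 𝔠 →
      ((List.ofFn fun m => exp ((-(t m)) • (A m + S))).prod * X *
        ((List.ofFn fun m => exp ((t m) • (A m + S))).reverse).prod =
       (List.ofFn fun m => exp ((-(t m)) • A m)).prod * X *
        ((List.ofFn fun m => exp ((t m) • A m)).reverse).prod) ∧
      (List.ofFn fun m => exp ((-(t m)) • A m)).prod * X *
        ((List.ofFn fun m => exp ((t m) • A m)).reverse).prod ∈ 𝔠 := by
  intro k
  induction k with
  | zero =>
    intro A hA t X hX
    simpa using hX
  | succ k ih =>
    intro A hA t X hX
    obtain ⟨ih1, ih2⟩ := ih (fun m => A m.succ) (fun m => hA m.succ) (fun m => t m.succ) X hX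
    simp only [List.ofFn_succ, List.prod_cons, List.reverse_cons, List.prod_append,
      List.prod_cons, List.prod_nil, mul_one]
    rw [mul_shuffle, mul_shuffle, ih1]
    constructor
    · exact cnj_eq 𝔠 (A 0) S _ (hA 0) hS ih2 (t 0)
    · exact cnj_mem 𝔠 (A 0) _ (hA 0) ih2 (t 0)

theorem final (n' r : ℕ)
    (C S H0 : Matrix (Fin n') (Fin n') ℂ) (H : Fin r → Matrix (Fin n') (Fin n') ℂ)
    (𝔠 : Submodule ℂ (Matrix (Fin n') (Fin n') ℂ))
    (hC : C ∈ 𝔠)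
    (h0 : ∀ X ∈ 𝔠, ⁅X, H0⁆ ∈ 𝔠)
    (hi : ∀ X ∈ 𝔠, ∀ i : Fin r, ⁅X, H i⁆ ∈ 𝔠)
    (hS : ∀ X ∈ 𝔠, ⁅X, S⁆ = 0) :
    ∀ (k : ℕ) (t : Fin k → ℝ) (u : Fin k → Fin r → ℝ),
      (List.ofFn fun m => exp ((-(t m)) • ((H0 + ∑ i, u m i • H i) + S))).prod * C *
        ((List.ofFn fun m => exp ((t m) • ((H0 + ∑ i, u m i • H i) + S))).reverse).prod =
      (List.ofFn fun m => exp ((-(t m)) • (H0 + ∑ i, u m i • H i))).prod * C *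
        ((List.ofFn fun m => exp ((t m) • (H0 + ∑ i, u m i • H i))).reverse).prod := by
  intro k t u
  have hA : ∀ m : Fin k, ∀ Y ∈ 𝔠, ⁅Y, H0 + ∑ i, u m i • H i⁆ ∈ 𝔠 := by
    intro m Y hY
    have heq : ⁅Y, H0 + ∑ i, u m i • H i⁆ = ⁅Y, H0⁆ + ∑ i, u m i • ⁅Y, H i⁆ := by
      simp only [Ring.lie_def, mul_add, add_mul, Finset.mul_sum, Finset.sum_mul,
        mul_smul_comm, smul_mul_assoc, smul_sub, Finset.sum_sub_distrib]
      abel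
    rw [heq]
    exact add_mem (h0 Y hY)
      (Submodule.sum_mem _ fun i _ => Submodule.smul_of_tower_mem _ _ (hi Y hY i))
  exact (prod_conj 𝔠 S hS k (fun m => H0 + ∑ i, u m i • H i) hA t C hC).1

end

end OpenLoopAux


/-- Finite-dimensional, piecewise-constant-control form of the open-loop invariance theorem:
if the subspace `𝔠` contains `C`, is stable under bracketing with the drift `H0` and the
controls `H i`, and commutes with the decoherence Hamiltonian `S`, then the Heisenberg
evolution of `C` under the controlled dynamics with `S` present equals that with `S` absent,
for all piecewise-constant controls. -/
theorem piecewise_constant_open_loop_invariance (n r : ℕ)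
    (C S H0 : Matrix (Fin n) (Fin n) ℂ) (H : Fin r → Matrix (Fin n) (Fin n) ℂ)
    (𝔠 : Submodule ℂ (Matrix (Fin n) (Fin n) ℂ))
    (hC : C ∈ 𝔠)
    (h0 : ∀ X ∈ 𝔠, ⁅X, H0⁆ ∈ 𝔠)
    (hi : ∀ X ∈ 𝔠, ∀ i : Fin r, ⁅X, H i⁆ ∈ 𝔠)
    (hS : ∀ X ∈ 𝔠, ⁅X, S⁆ = 0) :
    ∀ (k : ℕ) (t : Fin k → ℝ) (u : Fin k → Fin r → ℝ),
      (List.ofFn fun m => exp ((-(t m)) • ((H0 + ∑ i, u m i • H i) + S))).prod * C *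
        ((List.ofFn fun m => exp ((t m) • ((H0 + ∑ i, u m i • H i) + S))).reverse).prod =
      (List.ofFn fun m => exp ((-(t m)) • (H0 + ∑ i, u m i • H i))).prod * C *
        ((List.ofFn fun m => exp ((t m) • (H0 + ∑ i, u m i • H i))).reverse).prod :=
  OpenLoopAux.final n r C S H0 H 𝔠 hC h0 hi hS
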